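/- For n ≥ 2 and m ≥ 2, the maximal Dyck path D_m in the lattice rectangle from (0,0) to (u_m, u_{m−1}) contains exactly u_{m−2} vertical edges that are immediately preceded by exactly n−1 horizontal edges; all other vertical edges of D_m are immediately preceded by exactly n horizontal edges. -/

import Mathlib

/-- The Chebyshev-like numbers `u 0 = 0`, `u 1 = 1`, `u (k+2) = n * u (k+1) - u k`. -/
def kron (n : ℕ) : ℕ → ℤ
  | 0 => 0
  | 1 => 1
  | k + 2 => n * kron n (k + 1) - kron n k

/-- The maximal Dyck path `D_m`, as a word in the alphabet `Bool`
(`true` = horizontal step, `false` = vertical step). -/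
def Dyck (n : ℕ) : ℕ → List Bool
  | 0 => []
  | 1 => [true]
  | 2 => List.replicate n true ++ [false]
  | m + 3 => List.flatten (List.replicate (n - 1) (Dyck n (m + 2))) ++
      (Dyck n (m + 2)).drop (Dyck n (m + 1)).length

/-- The number of horizontal edges immediately preceding position `i` in the path `l`,
i.e. the length of the maximal run of `H`'s ending just before `i`. -/
def precH (l : List Bool) (i : ℕ) : ℕ :=
  ((l.take i).reverse.takeWhile (fun b => b = true)).length

/-! ### auxiliary machinery -/

def wblock (r : ℕ) : List Bool := List.replicate r true ++ [false]

def word (rs : List ℕ) : List Bool := rs.flatMap wblock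

lemma word_nil : word [] = [] := rfl

lemma word_cons (r : ℕ) (rs : List ℕ) : word (r :: rs) = wblock r ++ word rs := rfl

lemma word_append (a b : List ℕ) : word (a ++ b) = word a ++ word b :=
  List.flatMap_append (xs := a) (ys := b) (f := wblock)

lemma takeWhile_len (X Y : List Bool) :
    (List.takeWhile (fun b => b = true) (X ++ false :: Y)).length
      = (List.takeWhile (fun b => b = true) X).length := by
  induction X with
  | nil => simp
  | cons a X ih =>
    cases a
    · simp [List.takeWhile_cons]
    · simpa [List.takeWhile_cons] using ih

lemma precH_append (u v : List Bool) (j : ℕ) :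
    precH ((u ++ [false]) ++ v) (u.length + 1 + j) = precH v j := by
  unfold precH
  have h1 : ((u ++ [false]) ++ v).take (u.length + 1 + j) = (u ++ [false]) ++ v.take j := by
    have := List.take_length_add_append (l₁ := u ++ [false]) (l₂ := v) j
    simpa [Nat.add_assoc] using this
  rw [h1]
  have h2 : ((u ++ [false]) ++ v.take j).reverse = (v.take j).reverse ++ false :: u.reverse := by
    simp
  rw [h2, takeWhile_len]

lemma takeWhile_replicate_true (r : ℕ) :
    List.takeWhile (fun b => b = true) (List.replicate r true) = List.replicate r true := by
  induction r with
  | zero => simp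
  | succ r ih => simp [List.replicate_succ, List.takeWhile_cons, ih]

lemma precH_block (r : ℕ) (v : List Bool) :
    precH (List.replicate r true ++ ([false] ++ v)) r = r := by
  unfold precH
  have h1 : (List.replicate r true ++ ([false] ++ v)).take r = List.replicate r true := by
    have := List.take_left (l₁ := List.replicate r true) (l₂ := [false] ++ v)
    simpa using this
  rw [h1, List.reverse_replicate, takeWhile_replicate_true, List.length_replicate]

lemma getD_replicate_true (r i : ℕ) : (List.replicate r true).getD i true = true := by
  induction r generalizing i with
  | zero => simp [List.getD]
  | succ r ih => cases i <;> simp [List.replicate_succ, List.getD, ih]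

lemma wblock_length (r : ℕ) : (wblock r).length = r + 1 := by
  simp [wblock]

lemma wblock_getD_lt (r i : ℕ) (v : List Bool) (h : i < r) :
    ((wblock r ++ v)).getD i true = true := by
  rw [wblock, List.append_assoc, List.getD_append _ _ _ _ (by simpa using h),
    getD_replicate_true]

lemma wblock_getD_eq (r : ℕ) (v : List Bool) :
    ((wblock r ++ v)).getD r true = false := by
  rw [wblock, List.append_assoc,
    List.getD_append_right _ _ _ _ (by simp)]
  simp

lemma wblock_getD_gt (r j : ℕ) (v : List Bool) :
    ((wblock r ++ v)).getD (r + 1 + j) true = v.getD j true := by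
  rw [List.getD_append_right _ _ _ _ (by rw [wblock_length]; omega)]
  congr 1
  rw [wblock_length]
  omega

lemma wblock_precH (r j : ℕ) (v : List Bool) :
    precH (wblock r ++ v) (r + 1 + j) = precH v j := by
  have := precH_append (List.replicate r true) v j
  simpa [wblock] using this

lemma wblock_precH_eq (r : ℕ) (v : List Bool) : precH (wblock r ++ v) r = r := by
  have := precH_block r v
  simpa [wblock, List.append_assoc] using this

lemma word_length (r : ℕ) (rs : List ℕ) :
    (word (r :: rs)).length = (r + 1) + (word rs).length := by
  rw [word_cons, List.length_append, wblock_length]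

lemma word_prec : ∀ (rs : List ℕ) (i : ℕ), i < (word rs).length →
    (word rs).getD i true = false → precH (word rs) i ∈ rs := by
  intro rs
  induction rs with
  | nil => simp [word_nil]
  | cons r rs ih =>
    intro i hi hfalse
    rw [word_cons] at hfalse hi ⊢
    rcases lt_trichotomy i r with h | h | h
    · rw [wblock_getD_lt r i _ h] at hfalse; exact absurd hfalse (by simp)
    · subst h
      rw [wblock_precH_eq]
      exact List.mem_cons_self
    · have hij : i = r + 1 + (i - (r + 1)) := by omega
      rw [hij] at hfalse ⊢
      rw [wblock_getD_gt] at hfalse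
      rw [wblock_precH]
      have hlen : i - (r + 1) < (word rs).length := by
        rw [List.length_append, wblock_length] at hi; omega
      exact List.mem_cons_of_mem r (ih _ hlen hfalse)

lemma word_count (v : ℕ) : ∀ (rs : List ℕ),
    (List.range (word rs).length).countP
        (fun i => decide ((word rs).getD i true = false ∧ precH (word rs) i = v))
      = rs.count v := by
  intro rs
  induction rs with
  | nil => simp [word_nil]
  | cons r rs ih =>
    rw [word_length, List.range_add, List.countP_append, List.countP_map]
    have h1 : (List.range (r + 1)).countP
        (fun i => decide ((word (r :: rs)).getD i true = false ∧ precH (word (r :: rs)) i = v))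
        = if r = v then 1 else 0 := by
      rw [List.range_succ, List.countP_append]
      have hz : (List.range r).countP
          (fun i => decide ((word (r :: rs)).getD i true = false ∧ precH (word (r :: rs)) i = v))
          = 0 := by
        apply List.countP_eq_zero.mpr
        intro i hi
        rw [List.mem_range] at hi
        simp only [word_cons, wblock_getD_lt r i _ hi, decide_eq_true_eq]
        rintro ⟨h, -⟩
        exact absurd h (by simp)
      rw [hz]
      simp only [word_cons, List.countP_cons, List.countP_nil, wblock_getD_eq,
        wblock_precH_eq, decide_eq_true_eq]
      by_cases hrv : r = v <;> simp [hrv]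
    have h2 : (List.range (word rs).length).countP
        ((fun i => decide ((word (r :: rs)).getD i true = false ∧ precH (word (r :: rs)) i = v))
          ∘ (fun x => (r + 1) + x))
        = rs.count v := by
      rw [← ih]
      apply List.countP_congr
      intro j hj
      simp only [Function.comp_apply, word_cons, decide_eq_true_eq]
      simp only [wblock_getD_gt, wblock_precH, decide_eq_true_eq]
    rw [h1, h2, List.count_cons]
    by_cases hrv : r = v <;> simp [hrv] <;> omega

/-! ### the runs of `Dyck` -/

def runs (n : ℕ) : ℕ → List ℕ
  | 0 => [n]
  | 1 => List.replicate (n - 1) n ++ [n - 1]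
  | k + 2 => (List.replicate (n - 1) (runs n (k + 1))).flatten ++
      (runs n (k + 1)).drop (runs n k).length

lemma runs_prefix {n : ℕ} (hn : 2 ≤ n) (k : ℕ) : runs n k <+: runs n (k + 1) := by
  have hrep : ∀ (α : Type) (x : List α), (List.replicate (n - 1) x).flatten
      = x ++ (List.replicate (n - 2) x).flatten := by
    intro α x
    have h : n - 1 = (n - 2) + 1 := by omega
    rw [h, List.replicate_succ, List.flatten_cons]
  cases k with
  | zero =>
    refine ⟨List.replicate (n - 2) n ++ [n - 1], ?_⟩
    have h : n - 1 = (n - 2) + 1 := by omega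
    show [n] ++ _ = runs n 1
    rw [show runs n 1 = List.replicate (n - 1) n ++ [n - 1] from rfl, h, List.replicate_succ]
    simp
  | succ k =>
    refine ⟨(List.replicate (n - 2) (runs n (k + 1))).flatten ++
      (runs n (k + 1)).drop (runs n k).length, ?_⟩
    rw [show runs n (k + 2) = (List.replicate (n - 1) (runs n (k + 1))).flatten ++
      (runs n (k + 1)).drop (runs n k).length from rfl, hrep]
    simp [List.append_assoc]

lemma runs_mem {n : ℕ} (hn : 2 ≤ n) : ∀ k, ∀ r ∈ runs n k, r = n - 1 ∨ r = n := by
  intro k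
  induction k with
  | zero => intro r hr; simp [runs] at hr; right; exact hr
  | succ k ih =>
    cases k with
    | zero =>
      intro r hr
      simp only [runs, List.mem_append, List.mem_replicate, List.mem_singleton] at hr
      rcases hr with ⟨-, h⟩ | h
      · right; exact h
      · left; exact h
    | succ k' =>
      intro r hr
      simp only [runs, List.mem_append, List.mem_flatten, List.mem_replicate] at hr
      rcases hr with ⟨l, ⟨-, rfl⟩, hrl⟩ | h
      · exact ih r hrl
      · exact ih r (List.mem_of_mem_drop h)

lemma runs_count {n : ℕ} (hn : 2 ≤ n) :
    ∀ k, ((runs n k).count (n - 1) : ℤ) = kron n k := by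
  have key : ∀ k, ((runs n k).count (n - 1) : ℤ) = kron n k ∧
      ((runs n (k + 1)).count (n - 1) : ℤ) = kron n (k + 1) := by
    intro k
    induction k with
    | zero =>
      constructor
      · show (([n] : List ℕ).count (n - 1) : ℤ) = kron n 0
        rw [List.count_eq_zero.mpr (by simp; omega)]
        rfl
      · show (((List.replicate (n - 1) n ++ [n - 1]).count (n - 1) : ℕ) : ℤ) = kron n 1
        rw [List.count_append, List.count_replicate,
          List.count_eq_one_of_mem (by simp) (by simp)]
        simp [show ¬ ((n : ℕ) = n - 1) by omega, kron]
    | succ k ih =>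
      obtain ⟨ih0, ih1⟩ := ih
      refine ⟨ih1, ?_⟩
      obtain ⟨t, ht⟩ := runs_prefix hn k
      have hdrop : (runs n (k + 1)).drop (runs n k).length = t := by
        rw [← ht, List.drop_left]
      have hcnt : (runs n (k + 1)).count (n - 1)
          = (runs n k).count (n - 1) + t.count (n - 1) := by
        rw [← ht, List.count_append]
      have hflat : ((List.replicate (n - 1) (runs n (k + 1))).flatten).count (n - 1)
          = (n - 1) * (runs n (k + 1)).count (n - 1) := by
        rw [List.count_flatten, List.map_replicate, List.sum_replicate, smul_eq_mul]
      show (((runs n (k + 2)).count (n - 1) : ℕ) : ℤ) = kron n (k + 2)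
      rw [show runs n (k + 2) = (List.replicate (n - 1) (runs n (k + 1))).flatten ++
        (runs n (k + 1)).drop (runs n k).length from rfl, hdrop, List.count_append, hflat]
      rw [show kron n (k + 2) = n * kron n (k + 1) - kron n k from rfl, ← ih0, ← ih1]
      have hc : ((runs n (k + 1)).count (n - 1) : ℤ)
          = ((runs n k).count (n - 1) : ℤ) + (t.count (n - 1) : ℤ) := by
        exact_mod_cast hcnt
      have hn1 : ((n - 1 : ℕ) : ℤ) = (n : ℤ) - 1 := by push_cast; omega
      push_cast
      rw [hn1] at *
      linarith
  exact fun k => (key k).1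

lemma word_replicate (j r : ℕ) :
    word (List.replicate j r) = (List.replicate j (wblock r)).flatten := by
  induction j with
  | zero => simp [word_nil]
  | succ j ih => simp [List.replicate_succ, word_cons, ih]

lemma word_flatten_replicate (j : ℕ) (rs : List ℕ) :
    word ((List.replicate j rs).flatten) = (List.replicate j (word rs)).flatten := by
  induction j with
  | zero => simp [word_nil]
  | succ j ih => simp [List.replicate_succ, List.flatten_cons, word_append, ih]

lemma dyck_eq {n : ℕ} (hn : 2 ≤ n) :
    ∀ k, Dyck n (k + 2) = word (runs n k) ∧ Dyck n (k + 3) = word (runs n (k + 1)) := by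
  have hD2 : Dyck n 2 = wblock n := rfl
  intro k
  induction k with
  | zero =>
    constructor
    · rw [hD2, show runs n 0 = [n] from rfl]
      simp [word]
    · show List.flatten (List.replicate (n - 1) (Dyck n 2)) ++
        (Dyck n 2).drop (Dyck n 1).length = word (runs n 1)
      have h5 : wblock n = true :: wblock (n - 1) := by
        have h : n = (n - 1) + 1 := by omega
        rw [wblock, wblock]
        conv_lhs => rw [h, List.replicate_succ]
        rfl
      rw [hD2, show (Dyck n 1).length = 1 from rfl, h5, List.drop_succ_cons, List.drop_zero]
      rw [show runs n 1 = List.replicate (n - 1) n ++ [n - 1] from rfl, word_append,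
        word_replicate, h5]
      simp [word]
  | succ k ih =>
    obtain ⟨ih0, ih1⟩ := ih
    refine ⟨ih1, ?_⟩
    obtain ⟨t, ht⟩ := runs_prefix hn k
    have h3 : (runs n (k + 1)).drop (runs n k).length = t := by
      rw [← ht, List.drop_left]
    have h4 : (word (runs n (k + 1))).drop (word (runs n k)).length = word t := by
      rw [← ht, word_append, List.drop_left]
    show List.flatten (List.replicate (n - 1) (Dyck n (k + 3))) ++
        (Dyck n (k + 3)).drop (Dyck n (k + 2)).length = word (runs n (k + 2))
    rw [ih1, ih0, h4]
    rw [show runs n (k + 2) = (List.replicate (n - 1) (runs n (k + 1))).flatten ++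
      (runs n (k + 1)).drop (runs n k).length from rfl, h3, word_append,
      word_flatten_replicate]

lemma filter_range_card (N : ℕ) (p : ℕ → Prop) [DecidablePred p] :
    ((Finset.range N).filter p).card = (List.range N).countP (fun i => decide (p i)) := by
  induction N with
  | zero => simp
  | succ n ih =>
    rw [Finset.range_add_one, List.range_succ, List.countP_append, Finset.filter_insert]
    by_cases h : p n <;> simp [h, Finset.card_insert_of_notMem, ih]


/-- for `n ≥ 2` and `m ≥ 2`, every vertical edge of `D_m` is immediately
preceded by exactly `n - 1` or exactly `n` horizontal edges, and exactly `u (m-2)` of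
the vertical edges are immediately preceded by exactly `n - 1` horizontal edges. -/
theorem stmt_9 (n m : ℕ) (hn : 2 ≤ n) (hm : 2 ≤ m) :
    (∀ i ∈ Finset.range (Dyck n m).length, (Dyck n m).getD i true = false →
      precH (Dyck n m) i = n - 1 ∨ precH (Dyck n m) i = n) ∧
    ((((Finset.range (Dyck n m).length).filter
        (fun i => (Dyck n m).getD i true = false ∧ precH (Dyck n m) i = n - 1)).card : ℤ)
      = kron n (m - 2)) := by
  obtain ⟨k, rfl⟩ : ∃ k, m = k + 2 := ⟨m - 2, by omega⟩
  have hD := (dyck_eq hn k).1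
  constructor
  · intro i hi hf
    rw [Finset.mem_range] at hi
    rw [hD] at hi hf ⊢
    exact runs_mem hn k _ (word_prec _ i hi hf)
  · rw [filter_range_card]
    simp only [hD]
    rw [word_count (n - 1) (runs n k)]
    rw [show k + 2 - 2 = k from rfl]
    exact runs_count hn k
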